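/- Let x = x₁⋯x_n ∈ {0,1}^n be a circular string, let s = s₁⋯s_k ∈ {0,1}^k with 1 ≤ k ≤ n, and let q ∈ (0,1) be the deletion probability. For 0 ≤ i ≤ n−k, let c_i be the number of pairs (j, (t₁,…,t_k)) with j ∈ {0,…,n−1} and 0 ≤ t₁ < t₂ < ⋯ < t_k = k+i−1 such that x_{j+t_ℓ} = s_ℓ for all 1 ≤ ℓ ≤ k (indices of x taken modulo n). Then the probability that a circular trace of x starts with s — i.e., that the output of the deletion channel applied to x^{(J)} (with J uniform in {0,…,n−1}) has length at least k and its first k bits equal s — is exactly (1/n)·(1−q)^k · Σ_{i=0}^{n−k} c_i q^i. -/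

import Mathlib

/-- The probability of a given deletion pattern: each bit with `m i = true` is retained
(probability `1 - q`) and each bit with `m i = false` is deleted (probability `q`). -/
noncomputable def maskProb (q : ℝ) {n : ℕ} (m : Fin n → Bool) : ℝ :=
  ∏ i : Fin n, if m i then (1 - q) else q

/-- The trace of the length-`n` string `x` under the deletion pattern `m`:
the retained bits concatenated in order. -/
def applyMask {n : ℕ} (x : ℕ → Bool) (m : Fin n → Bool) : List Bool :=
  ((List.finRange n).filter (fun i => m i)).map (fun i => x i.val)

/-- The cyclic shift `x^{(j)}`: `x^{(j)}_i = x_{(i+j) mod n}`. -/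
def cyclicShift (n : ℕ) (x : ℕ → Bool) (j : ℕ) : ℕ → Bool :=
  fun i => x ((i + j) % n)

open Classical in
/-- The probability that a circular trace of the length-`n` string `x` (deletion
probability `q`) satisfies the event `E`: a uniformly random rotation `J` followed
by an independent deletion pattern. -/
noncomputable def circProb (q : ℝ) (n : ℕ) (x : ℕ → Bool) (E : List Bool → Prop) : ℝ :=
  ∑ j : Fin n, ∑ m : Fin n → Bool,
    if E (applyMask (cyclicShift n x j.val) m) then ((1 : ℝ) / n) * maskProb q m else 0

open Finset in
private lemma sum_pi_bool {α : Type*} [Fintype α] [DecidableEq α] (g : α → Bool → ℝ) :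
    ∑ b : α → Bool, ∏ i, g i (b i) = ∏ i, (g i true + g i false) := by
  rw [← Fintype.prod_sum]
  exact Finset.prod_congr rfl fun i _ => by simp [Fintype.sum_bool]

open Finset in
private lemma sum_mask_fixed (q : ℝ) {n : ℕ} (p : Fin n → Prop) [DecidablePred p]
    (f : Fin n → Bool) :
    ∑ m : Fin n → Bool, (if ∀ i, p i → m i = f i then maskProb q m else 0)
      = ∏ i : {i // p i}, (if f i.1 then (1-q) else q) := by
  classical
  rw [← ((Equiv.piEquivPiSubtypeProd p (fun _ => Bool)).symm.sum_comp
    (fun m => if ∀ i, p i → m i = f i then maskProb q m else 0))]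
  rw [Fintype.sum_prod_type]
  have key : ∀ (a : {i // p i} → Bool) (b : {i // ¬ p i} → Bool),
      (if ∀ i, p i → ((Equiv.piEquivPiSubtypeProd p (fun _ => Bool)).symm (a,b)) i = f i
        then maskProb q ((Equiv.piEquivPiSubtypeProd p (fun _ => Bool)).symm (a,b)) else 0)
      = (if a = (fun i => f i.1) then ∏ i : {i // p i}, (if f i.1 then (1-q) else q) else 0)
        * ∏ i : {i // ¬ p i}, (if b i then (1-q) else q) := by
    intro a b
    have hval : ∀ i, ((Equiv.piEquivPiSubtypeProd p (fun _ => Bool)).symm (a,b)) i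
        = if h : p i then a ⟨i,h⟩ else b ⟨i,h⟩ := fun i => rfl
    have hcond : (∀ i, p i → ((Equiv.piEquivPiSubtypeProd p (fun _ => Bool)).symm (a,b)) i = f i)
        ↔ a = (fun i => f i.1) := by
      constructor
      · intro h; funext i; have := h i.1 i.2; rwa [hval, dif_pos i.2] at this
      · intro h i hi; rw [hval, dif_pos hi, h]
    by_cases hc : a = (fun i => f i.1)
    · rw [if_pos (hcond.2 hc), if_pos hc]
      unfold maskProb
      rw [← Fintype.prod_subtype_mul_prod_subtype p (fun i => if ((Equiv.piEquivPiSubtypeProd p (fun _ => Bool)).symm (a,b)) i then (1-q) else q)]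
      congr 1
      · exact Finset.prod_congr rfl fun i _ => by rw [hval, dif_pos i.2, hc]
      · exact Finset.prod_congr rfl fun i _ => by rw [hval, dif_neg i.2]
    · rw [if_neg (fun h => hc (hcond.1 h)), if_neg hc, zero_mul]
  simp only [key]
  rw [← Finset.sum_mul_sum]
  rw [sum_pi_bool (fun _ b => if b then (1-q) else q)]
  simp



private def maskL {n : ℕ} (m : Fin n → Bool) : List (Fin n) :=
  (List.finRange n).filter (fun i => m i)

private lemma maskL_sorted {n : ℕ} (m : Fin n → Bool) :
    List.Pairwise (· < ·) (maskL m) :=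
  (List.pairwise_lt_finRange n).filter _

private lemma mem_maskL {n : ℕ} (m : Fin n → Bool) (i : Fin n) :
    i ∈ maskL m ↔ m i = true := by
  simp [maskL, List.mem_filter]

private lemma maskL_split {n k : ℕ} (m : Fin n → Bool) (t : Fin k → Fin n) (last : Fin k)
    (hlast : ∀ ℓ, ℓ ≤ last) (ht : StrictMono t)
    (hm : ∀ i : Fin n, i ≤ t last → (m i = true ↔ ∃ ℓ, t ℓ = i)) :
    maskL m = (List.finRange k).map t
      ++ (List.finRange n).filter (fun i => m i && decide (t last < i)) := by
  have himle : ∀ {i : Fin n}, (∃ ℓ, t ℓ = i) → i ≤ t last := by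
    rintro i ⟨ℓ, rfl⟩; exact ht.monotone (hlast ℓ)
  refine (fun hp hs => List.Perm.eq_of_pairwise (fun a b _ _ h1 h2 => absurd (lt_trans h1 h2) (lt_irrefl a)) (maskL_sorted m) hs hp) ?_ ?_
  · refine (List.perm_ext_iff_of_nodup ((List.nodup_finRange n).filter _) ?_).2 ?_
    · refine List.Nodup.append ((List.nodup_finRange k).map ht.injective)
        ((List.nodup_finRange n).filter _) ?_
      intro a ha hb
      simp only [List.mem_map, List.mem_finRange, true_and] at ha
      have h1 : a ≤ t last := himle (by simpa using ha)
      have h2 : t last < a := by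
        simp only [List.mem_filter, List.mem_finRange, true_and, Bool.and_eq_true,
          decide_eq_true_eq] at hb
        exact hb.2
      exact absurd h1 (not_le.2 h2)
    · intro i
      simp only [mem_maskL, List.mem_append, List.mem_map, List.mem_finRange, true_and,
        List.mem_filter, Bool.and_eq_true, decide_eq_true_eq]
      constructor
      · intro hmi
        by_cases hle : i ≤ t last
        · exact Or.inl ((hm i hle).1 hmi)
        · exact Or.inr ⟨hmi, not_le.1 hle⟩
      · rintro (h | h)
        · exact (hm i (himle h)).2 h
        · exact h.1
  · rw [List.pairwise_append]
    refine ⟨?_, (List.pairwise_lt_finRange n).filter _, ?_⟩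
    · rw [List.pairwise_map]
      exact (List.pairwise_lt_finRange k).imp (fun h => ht h)
    · intro a ha b hb
      simp only [List.mem_map, List.mem_finRange, true_and] at ha
      have h1 : a ≤ t last := himle (by simpa using ha)
      have h2 : t last < b := by
        simp only [List.mem_filter, List.mem_finRange, true_and, Bool.and_eq_true,
          decide_eq_true_eq] at hb
        exact hb.2
      exact lt_of_le_of_lt h1 h2

private lemma event_iff {n k : ℕ} (y : ℕ → Bool) (s : Fin k → Bool) (m : Fin n → Bool)
    (last : Fin k) (hlast : ∀ ℓ, ℓ ≤ last) :
    ((List.finRange k).map s <+: applyMask y m) ↔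
      ∃ t : Fin k → Fin n, StrictMono t ∧ (∀ ℓ, y (t ℓ).val = s ℓ) ∧
        (∀ i : Fin n, i ≤ t last → (m i = true ↔ ∃ ℓ, t ℓ = i)) := by
  constructor
  · intro h
    have hlen : k ≤ (maskL m).length := by
      have := h.length_le
      simpa [applyMask, maskL] using this
    refine ⟨fun ℓ => (maskL m).get ⟨ℓ.val, lt_of_lt_of_le ℓ.isLt hlen⟩, ?_, ?_, ?_⟩
    · intro a b hab
      exact (List.sortedLT_iff_pairwise.2 (maskL_sorted m)).strictMono_get (by simpa using hab)
    · intro ℓ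
      have hgl : ℓ.val < ((List.finRange k).map s).length := by simpa using ℓ.isLt
      have := h.getElem (i := ℓ.val) hgl
      simp only [applyMask, List.getElem_map, List.getElem_finRange, Fin.cast_mk] at this
      simpa [maskL, List.get_eq_getElem, Fin.eta, eq_comm] using this
    · intro i hle
      constructor
      · intro hmi
        obtain ⟨r, hr⟩ := List.get_of_mem ((mem_maskL m i).2 hmi)
        have hrk : r.val < k := by
          by_contra hcon
          have hlt : (⟨last.val, lt_of_lt_of_le last.isLt hlen⟩ : Fin (maskL m).length) < r := by
            simp only [Fin.lt_def]
            have := last.isLt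
            omega
          have := (List.sortedLT_iff_pairwise.2 (maskL_sorted m)).strictMono_get hlt
          rw [hr] at this
          exact absurd hle (not_le.2 this)
        exact ⟨⟨r.val, hrk⟩, by simpa [Fin.eta] using hr⟩
      · rintro ⟨ℓ, rfl⟩
        exact (mem_maskL m _).1 (List.get_mem _ _)
  · rintro ⟨t, ht, hmatch, hm⟩
    have hsplit := maskL_split m t last hlast ht hm
    have : applyMask y m = ((maskL m).map (fun i => y i.val)) := rfl
    rw [this, hsplit, List.map_append, List.map_map]
    have h2 : (List.finRange k).map ((fun i => y i.val) ∘ t) = (List.finRange k).map s :=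
      List.map_congr_left (fun ℓ _ => hmatch ℓ)
    rw [h2]
    exact List.prefix_append _ _

private lemma strictMono_le {k : ℕ} {g : Fin k → ℕ} (hg : StrictMono g) :
    ∀ v (hv : v < k), v ≤ g ⟨v, hv⟩ := by
  intro v
  induction v with
  | zero => intro hv; exact Nat.zero_le _
  | succ p ih =>
    intro hv
    have h1 := ih (by omega)
    have h2 : g ⟨p, by omega⟩ < g ⟨p+1, hv⟩ := hg (by simp [Fin.lt_def])
    omega

private lemma inMask_unique {n k : ℕ} (m : Fin n → Bool) (t t' : Fin k → Fin n) (last : Fin k)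
    (hlast : ∀ ℓ, ℓ ≤ last) (ht : StrictMono t) (ht' : StrictMono t')
    (hm : ∀ i, i ≤ t last → (m i = true ↔ ∃ ℓ, t ℓ = i))
    (hm' : ∀ i, i ≤ t' last → (m i = true ↔ ∃ ℓ, t' ℓ = i)) : t = t' := by
  have h1 := maskL_split m t last hlast ht hm
  have h2 := maskL_split m t' last hlast ht' hm'
  have heq : (List.finRange k).map t = (List.finRange k).map t' := by
    have e1 : (List.finRange k).map t = (maskL m).take k := by
      rw [h1, List.take_left' (by simp)]
    have e2 : (List.finRange k).map t' = (maskL m).take k := by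
      rw [h2, List.take_left' (by simp)]
    rw [e1, e2]
  funext ℓ
  exact List.map_inj_left.1 heq ℓ (List.mem_finRange ℓ)

open Classical in
private lemma key_sum {n k : ℕ} (hk1 : 1 ≤ k) (hkn : k ≤ n) (q : ℝ) (y : ℕ → Bool)
    (s : Fin k → Bool) :
    (∑ m : Fin n → Bool,
        if ((List.finRange k).map s) <+: applyMask y m then maskProb q m else 0)
    = (1-q)^k * ∑ i ∈ Finset.range (n-k+1),
        ((Finset.univ.filter (fun t : Fin k → Fin n =>
            StrictMono t ∧ (∀ ℓ, y (t ℓ).val = s ℓ) ∧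
              (t ⟨k-1, Nat.sub_lt hk1 Nat.one_pos⟩).val = k+i-1)).card : ℝ) * q^i := by
  have hlast : ∀ ℓ : Fin k, ℓ ≤ (⟨k-1, by omega⟩ : Fin k) := fun ℓ => by
    simp only [Fin.le_def]; have := ℓ.isLt; omega
  set last : Fin k := ⟨k-1, by omega⟩ with hlastdef
  set T' : Finset (Fin k → Fin n) :=
    Finset.univ.filter (fun t => StrictMono t ∧ ∀ ℓ, y (t ℓ).val = s ℓ) with hT'
  have hbool : ∀ (t : Fin k → Fin n) (m : Fin n → Bool) (i : Fin n),
      (m i = decide (∃ ℓ, t ℓ = i)) ↔ (m i = true ↔ ∃ ℓ, t ℓ = i) := by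
    intro t m i
    rw [Bool.eq_iff_iff, decide_eq_true_eq]
  have hpt : ∀ m : Fin n → Bool,
      (if ((List.finRange k).map s) <+: applyMask y m then maskProb q m else 0)
      = ∑ t ∈ T', (if (∀ i : Fin n, i ≤ t last → m i = decide (∃ ℓ, t ℓ = i))
          then maskProb q m else 0) := by
    intro m
    by_cases hE : ((List.finRange k).map s) <+: applyMask y m
    · obtain ⟨t0, ht0, hmatch0, hm0⟩ := (event_iff y s m last hlast).1 hE
      rw [if_pos hE, Finset.sum_eq_single t0]
      · rw [if_pos (fun i hi => (hbool t0 m i).2 (hm0 i hi))]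
      · intro t ht hne
        rw [if_neg]
        intro hc
        exact hne (inMask_unique m t t0 last hlast (Finset.mem_filter.1 ht).2.1 ht0
          (fun i hi => (hbool t m i).1 (hc i hi)) hm0)
      · intro hc
        exact absurd (Finset.mem_filter.2 ⟨Finset.mem_univ _, ht0, hmatch0⟩) hc
    · rw [if_neg hE]
      symm
      apply Finset.sum_eq_zero
      intro t ht
      rw [if_neg]
      intro hc
      exact hE ((event_iff y s m last hlast).2 ⟨t, (Finset.mem_filter.1 ht).2.1,
        (Finset.mem_filter.1 ht).2.2, fun i hi => (hbool t m i).1 (hc i hi)⟩)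
  rw [Finset.sum_congr rfl (fun m _ => hpt m), Finset.sum_comm]
  have hinner : ∀ t ∈ T',
      (∑ m : Fin n → Bool, if (∀ i : Fin n, i ≤ t last → m i = decide (∃ ℓ, t ℓ = i))
          then maskProb q m else 0)
      = (1-q)^k * q^((t last).val + 1 - k) := by
    intro t ht
    have hsm : StrictMono t := (Finset.mem_filter.1 ht).2.1
    have hmono : StrictMono (fun ℓ => (t ℓ).val) := fun a b h => hsm h
    have hge : k - 1 ≤ (t last).val := strictMono_le hmono (k-1) (by omega)
    rw [sum_mask_fixed q (fun i => i ≤ t last) (fun i => decide (∃ ℓ, t ℓ = i))]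
    rw [← Finset.prod_subtype (Finset.Iic (t last)) (fun i => Finset.mem_Iic)
      (fun i => if decide (∃ ℓ, t ℓ = i) = true then (1-q) else q)]
    rw [Finset.prod_ite (fun _ => (1-q)) (fun _ => q), Finset.prod_const, Finset.prod_const]
    have hfeq : (Finset.Iic (t last)).filter (fun i => decide (∃ ℓ, t ℓ = i) = true)
        = Finset.image t Finset.univ := by
      ext i
      simp only [Finset.mem_filter, Finset.mem_Iic, decide_eq_true_eq, Finset.mem_image,
        Finset.mem_univ, true_and]
      constructor
      · rintro ⟨-, ℓ, rfl⟩; exact ⟨ℓ, rfl⟩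
      · rintro ⟨ℓ, rfl⟩; exact ⟨hsm.monotone (hlast ℓ), ℓ, rfl⟩
    have hcard1 : ((Finset.Iic (t last)).filter (fun i => decide (∃ ℓ, t ℓ = i) = true)).card
        = k := by
      rw [hfeq, Finset.card_image_of_injective _ hsm.injective]
      simp
    have hcard2 : ((Finset.Iic (t last)).filter
        (fun i => ¬ (decide (∃ ℓ, t ℓ = i) = true))).card = (t last).val + 1 - k := by
      have := Finset.card_filter_add_card_filter_not
        (s := Finset.Iic (t last)) (p := fun i => decide (∃ ℓ, t ℓ = i) = true)
      rw [hcard1, Fin.card_Iic] at this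
      omega
    rw [hcard1, hcard2]
  rw [Finset.sum_congr rfl hinner]
  have hmaps : ∀ t ∈ T', ((t last).val + 1 - k) ∈ Finset.range (n-k+1) := by
    intro t ht
    have := (t last).isLt
    exact Finset.mem_range.2 (by omega)
  rw [← Finset.sum_fiberwise_of_maps_to hmaps]
  rw [Finset.mul_sum]
  apply Finset.sum_congr rfl
  intro i hi
  have hfib : T'.filter (fun t => (t last).val + 1 - k = i)
      = Finset.univ.filter (fun t : Fin k → Fin n =>
          StrictMono t ∧ (∀ ℓ, y (t ℓ).val = s ℓ) ∧ (t ⟨k-1, by omega⟩).val = k+i-1) := by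
    ext t
    simp only [hT', Finset.mem_filter, Finset.mem_univ, true_and, and_assoc]
    constructor
    · rintro ⟨hsm, hmat, hidx⟩
      have hmono : StrictMono (fun ℓ => (t ℓ).val) := fun a b h => hsm h
      have hge : k - 1 ≤ (t last).val := strictMono_le hmono (k-1) (by omega)
      refine ⟨hsm, hmat, ?_⟩
      show (t last).val = k + i - 1
      omega
    · rintro ⟨hsm, hmat, hidx⟩
      have hidx' : (t last).val = k + i - 1 := hidx
      exact ⟨hsm, hmat, by omega⟩
  rw [Finset.sum_congr hfib (fun t ht => by
    have hidx : (t last).val = k + i - 1 := (Finset.mem_filter.1 ht).2.2.2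
    have heq : (t last).val + 1 - k = i := by omega
    rw [heq])]
  rw [Finset.sum_const, nsmul_eq_mul]
  ring

theorem stmt_17 (n k : ℕ) (hn : 1 ≤ n) (hk1 : 1 ≤ k) (hkn : k ≤ n)
    (q : ℝ) (hq0 : 0 < q) (hq1 : q < 1) (x : ℕ → Bool) (s : Fin k → Bool) :
    -- the probability that a circular trace of `x` starts with `s`
    circProb q n x (fun w => ((List.finRange k).map s) <+: w) =
      ((1 : ℝ) / n) * (1 - q) ^ k *
        ∑ i ∈ Finset.range (n - k + 1),
          -- `c_i` is the number of pairs `(j, (t₁, …, t_k))` with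
          -- `0 ≤ t₁ < ⋯ < t_k = k + i − 1` and `x_{j + t_ℓ} = s_ℓ` for all `ℓ`
          (Nat.card {p : Fin n × (Fin k → ℕ) //
              StrictMono p.2 ∧ p.2 ⟨k - 1, by omega⟩ = k + i - 1 ∧
                ∀ ℓ : Fin k, x ((p.1.val + p.2 ℓ) % n) = s ℓ} : ℝ) * q ^ i := by
  classical
  have h1 : ∀ j : Fin n,
      (∑ m : Fin n → Bool,
        if ((List.finRange k).map s) <+: applyMask (cyclicShift n x j.val) m
          then ((1:ℝ)/n) * maskProb q m else 0)
      = ((1:ℝ)/n) * (1-q)^k * ∑ i ∈ Finset.range (n-k+1),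
          ((Finset.univ.filter (fun t : Fin k → Fin n =>
            StrictMono t ∧ (∀ ℓ, cyclicShift n x j.val (t ℓ).val = s ℓ) ∧
              (t ⟨k-1, by omega⟩).val = k+i-1)).card : ℝ) * q^i := by
    intro j
    have := key_sum (n := n) hk1 hkn q (cyclicShift n x j.val) s
    rw [mul_assoc, ← this, Finset.mul_sum]
    exact Finset.sum_congr rfl (fun m _ => by split <;> ring)
  have hcards : ∀ i ∈ Finset.range (n-k+1),
      ((Nat.card {p : Fin n × (Fin k → ℕ) //
          StrictMono p.2 ∧ p.2 ⟨k - 1, by omega⟩ = k + i - 1 ∧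
            ∀ ℓ : Fin k, x ((p.1.val + p.2 ℓ) % n) = s ℓ} : ℕ) : ℝ)
      = ∑ j : Fin n, ((Finset.univ.filter (fun t : Fin k → Fin n =>
          StrictMono t ∧ (∀ ℓ, cyclicShift n x j.val (t ℓ).val = s ℓ) ∧
            (t ⟨k-1, by omega⟩).val = k+i-1)).card : ℝ) := by
    intro i hi
    have hin : i ≤ n - k := by
      have := Finset.mem_range.1 hi; omega
    have hbnd : ∀ (t : Fin k → ℕ), StrictMono t → t ⟨k-1, by omega⟩ = k+i-1 →
        ∀ ℓ : Fin k, t ℓ < n := by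
      intro t hsm hlt ℓ
      have hle : t ℓ ≤ t ⟨k-1, by omega⟩ := by
        apply hsm.monotone
        simp only [Fin.le_def]
        have := ℓ.isLt; omega
      omega
    have e : {p : Fin n × (Fin k → ℕ) //
          StrictMono p.2 ∧ p.2 ⟨k - 1, by omega⟩ = k + i - 1 ∧
            ∀ ℓ : Fin k, x ((p.1.val + p.2 ℓ) % n) = s ℓ}
        ≃ (j : Fin n) × {t : Fin k → Fin n //
            StrictMono t ∧ (∀ ℓ, cyclicShift n x j.val (t ℓ).val = s ℓ) ∧
              (t ⟨k-1, by omega⟩).val = k+i-1} :=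
      { toFun := fun p => ⟨p.1.1,
          ⟨fun ℓ => ⟨p.1.2 ℓ, hbnd p.1.2 p.2.1 p.2.2.1 ℓ⟩,
            fun a b h => Fin.mk_lt_mk.2 (p.2.1 h),
            fun ℓ => by
              show x (((p.1.2 ℓ) + p.1.1.val) % n) = s ℓ
              rw [Nat.add_comm]
              exact p.2.2.2 ℓ,
            p.2.2.1⟩⟩,
        invFun := fun z => ⟨(z.1, fun ℓ => (z.2.1 ℓ).val),
          fun a b h => z.2.2.1 h,
          z.2.2.2.2,
          fun ℓ => by
            have := z.2.2.2.1 ℓ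
            rw [show cyclicShift n x z.1.val ((z.2.1 ℓ).val)
              = x (((z.2.1 ℓ).val + z.1.val) % n) from rfl] at this
            rw [Nat.add_comm] at this
            exact this⟩,
        left_inv := fun p => rfl,
        right_inv := fun z => rfl }
    rw [Nat.card_congr e, Nat.card_eq_fintype_card, Fintype.card_sigma]
    rw [Nat.cast_sum]
    exact Finset.sum_congr rfl (fun j _ => by rw [Fintype.card_subtype])
  rw [circProb]
  have hite : ∀ (j : Fin n) (m : Fin n → Bool),
      (@ite ℝ (List.map s (List.finRange k) <+: applyMask (cyclicShift n x j.val) m)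
        (Classical.propDecidable _) (1/(n:ℝ) * maskProb q m) 0)
      = (if List.map s (List.finRange k) <+: applyMask (cyclicShift n x j.val) m
          then 1/(n:ℝ) * maskProb q m else 0) := fun j m => by congr
  refine (Finset.sum_congr rfl (fun j _ =>
    (Finset.sum_congr rfl fun m _ => hite j m).trans (h1 j))).trans ?_
  rw [← Finset.mul_sum]
  congr 1
  rw [Finset.sum_comm]
  refine Finset.sum_congr rfl (fun i hi => ?_)
  rw [hcards i hi, Finset.sum_mul]
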